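/- For every integer n ≥ 1, the evaluation of the ternary-partition numerator at x = −1 satisfies num_T(n,−1) = 3^{v_3(n!)}, where v_3(M) denotes the exponent of 3 in the prime factorization of the positive integer M. -/

import Mathlib

open Polynomial Finset
open scoped Classical

/-- The ternary partitions of `n`: partitions of `n` all of whose parts are powers of `3`. -/
noncomputable def terParts (n : ℕ) : Finset (Nat.Partition n) :=
  Finset.univ.filter (fun μ => ∀ i ∈ μ.parts, ∃ k : ℕ, i = 3 ^ k)

/-- `h_{T,λ}(x) = ∏_{k ≥ 0, 3^k ≤ n} (1+x^{3^k})^(⌊n/3^k⌋ - m_λ(3^k))` in `ℤ[x]`. -/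
noncomputable def hT (n : ℕ) (μ : Nat.Partition n) : Polynomial ℤ :=
  ∏ k ∈ (Finset.range (n + 1)).filter (fun k => 3 ^ k ≤ n),
    (1 + X ^ (3 ^ k)) ^ (n / 3 ^ k - μ.parts.count (3 ^ k))

/-- `G_T(n,x)`: the (normalized) gcd of the `h_{T,λ}(x)` over ternary partitions `λ` of `n`. -/
noncomputable def GT (n : ℕ) : Polynomial ℤ :=
  (terParts n).gcd (hT n)

theorem GT_dvd_sum (n : ℕ) :
    ∃ q : Polynomial ℤ, (∑ μ ∈ terParts n, hT n μ) = GT n * q :=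
  exists_eq_mul_right_of_dvd (Finset.dvd_sum fun _ hμ => Finset.gcd_dvd hμ)

/-- `num_T(n,x) = (∑_{λ ternary partition of n} h_{T,λ}(x)) / G_T(n,x)`. -/
noncomputable def numT (n : ℕ) : Polynomial ℤ :=
  (GT_dvd_sum n).choose

namespace TernaryAux

noncomputable def Q : ℕ → Polynomial ℤ
  | 0 => X + 1
  | (j+1) => X ^ (2 * 3 ^ j) - X ^ (3 ^ j) + 1

lemma X_add_one_ne_zero : (X + 1 : Polynomial ℤ) ≠ 0 := by
  intro h
  have := congrArg (eval (0 : ℤ)) h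
  simp at this

lemma Q_eq_cyclotomic : ∀ j, Q j = cyclotomic (2 * 3 ^ j) ℤ
  | 0 => by
      rw [show 2 * 3 ^ 0 = 2 by norm_num, cyclotomic_two]; rfl
  | 1 => by
      have h := cyclotomic_expand_eq_cyclotomic_mul (p := 3) (n := 2)
        (by norm_num) (by norm_num) ℤ
      rw [cyclotomic_two] at h
      have hexp : (expand ℤ 3) (X + 1 : Polynomial ℤ) = X ^ 3 + 1 := by
        rw [map_add, expand_X, map_one]
      rw [hexp] at h
      have h2 : (X ^ 2 - X + 1 : Polynomial ℤ) * (X + 1) = X ^ 3 + 1 := by ring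
      have := mul_right_cancel₀ X_add_one_ne_zero (h2.trans h)
      rw [show (2 : ℕ) * 3 ^ 1 = 2 * 3 by norm_num]
      rw [← this]; show X ^ (2*3^0) - X ^ (3^0) + 1 = _; norm_num
  | (j+2) => by
      have ih := Q_eq_cyclotomic (j+1)
      have h := cyclotomic_expand_eq_cyclotomic (p := 3) (n := 2 * 3 ^ (j+1))
        (by norm_num) (by exact Dvd.dvd.mul_left (dvd_pow_self 3 (Nat.succ_ne_zero j)) 2) ℤ
      rw [← ih] at h
      have hexp : (expand ℤ 3) (Q (j+1)) = Q (j+2) := by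
        show (expand ℤ 3) (X ^ (2 * 3 ^ j) - X ^ (3 ^ j) + 1) = X ^ (2 * 3 ^ (j+1)) - X ^ (3 ^ (j+1)) + 1
        rw [map_add, map_sub, map_pow, map_pow, expand_X, map_one, ← pow_mul, ← pow_mul]
        congr 2 <;> ring
      rw [hexp] at h
      rw [h]
      congr 1
      ring

lemma Q_monic (j : ℕ) : (Q j).Monic := by
  rw [Q_eq_cyclotomic]; exact cyclotomic.monic _ ℤ

lemma Q_ne_zero (j : ℕ) : Q j ≠ 0 := (Q_monic j).ne_zero

lemma Q_irred (j : ℕ) : Irreducible (Q j) := by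
  rw [Q_eq_cyclotomic]; exact cyclotomic.irreducible (by positivity)

lemma Q_inj {i j : ℕ} (h : Q i = Q j) : i = j := by
  rw [Q_eq_cyclotomic, Q_eq_cyclotomic] at h
  have := cyclotomic_injective (R := ℤ) h
  have h3 : (3 : ℕ) ^ i = 3 ^ j := by omega
  exact Nat.pow_right_injective (by norm_num) h3

lemma eval_Q_zero : eval (-1 : ℤ) (Q 0) = 0 := by
  show eval (-1 : ℤ) (X + 1) = 0; simp

lemma eval_Q_succ (j : ℕ) : eval (-1 : ℤ) (Q (j+1)) = 3 := by
  show eval (-1 : ℤ) (X ^ (2 * 3 ^ j) - X ^ (3 ^ j) + 1) = 3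
  have he : Even (2 * 3 ^ j) := even_two.mul_right _
  have ho : Odd (3 ^ j) := (Nat.odd_iff.mpr rfl : Odd 3).pow
  simp [he.neg_one_pow, ho.neg_one_pow]

lemma prod_Q : ∀ k, ∏ j ∈ range (k+1), Q j = 1 + X ^ (3 ^ k)
  | 0 => by simp [Q]; ring
  | (k+1) => by
      rw [Finset.prod_range_succ, prod_Q k]
      show (1 + X ^ 3 ^ k) * (X ^ (2 * 3 ^ k) - X ^ (3 ^ k) + 1) = _
      rw [show 2 * 3 ^ k = 3 ^ k * 2 from mul_comm _ _, pow_mul,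
        show (3:ℕ) ^ (k+1) = 3 ^ k * 3 from pow_succ 3 k, pow_mul]
      ring

def Kk (n : ℕ) : ℕ := Nat.log 3 n
def aa (n k : ℕ) : ℕ := n / 3 ^ k
noncomputable def mm (n : ℕ) (μ : Nat.Partition n) (k : ℕ) : ℕ := μ.parts.count (3 ^ k)
noncomputable def bb (n : ℕ) (μ : Nat.Partition n) (j : ℕ) : ℕ :=
  ∑ k ∈ Ico j (Kk n + 1), (aa n k - mm n μ k)
def cc (n j : ℕ) : ℕ := ∑ k ∈ Ico (j + 1) (Kk n + 1), aa n k
noncomputable def PP (n : ℕ) : Polynomial ℤ := ∏ j ∈ range (Kk n + 1), Q j ^ cc n j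
noncomputable def TT (n : ℕ) : Polynomial ℤ :=
  ∑ μ ∈ terParts n, ∏ j ∈ range (Kk n + 1), Q j ^ (bb n μ j - cc n j)

variable {n : ℕ}

lemma pow_le_iff (hn : n ≠ 0) {k : ℕ} : 3 ^ k ≤ n ↔ k ≤ Kk n :=
  (Nat.le_log_iff_pow_le (by norm_num) hn).symm

lemma filter_eq (hn : n ≠ 0) :
    (Finset.range (n + 1)).filter (fun k => 3 ^ k ≤ n) = range (Kk n + 1) := by
  ext k
  simp only [mem_filter, mem_range, Nat.lt_succ_iff]
  constructor
  · rintro ⟨-, h⟩; exact (pow_le_iff hn).mp h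
  · intro h
    have h3 : 3 ^ k ≤ n := (pow_le_iff hn).mpr h
    exact ⟨le_trans (Nat.lt_pow_self (by norm_num) : k < 3 ^ k).le h3, h3⟩

lemma hT_eq (hn : n ≠ 0) (μ : Nat.Partition n) :
    hT n μ = ∏ j ∈ range (Kk n + 1), Q j ^ bb n μ j := by
  rw [hT, filter_eq hn]
  calc ∏ k ∈ range (Kk n + 1), (1 + X ^ 3 ^ k) ^ (n / 3 ^ k - Multiset.count (3 ^ k) μ.parts)
      = ∏ k ∈ range (Kk n + 1), ∏ j ∈ range (k+1), Q j ^ (aa n k - mm n μ k) := by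
        refine prod_congr rfl fun k _ => ?_
        rw [Finset.prod_pow, prod_Q k]; rfl
    _ = ∏ j ∈ range (Kk n + 1), ∏ k ∈ Ico j (Kk n + 1), Q j ^ (aa n k - mm n μ k) := by
        refine Finset.prod_comm' fun k j => ?_
        simp only [mem_range, mem_Ico, Nat.lt_succ_iff]
        omega
    _ = ∏ j ∈ range (Kk n + 1), Q j ^ bb n μ j := by
        refine prod_congr rfl fun j _ => ?_
        rw [bb, Finset.prod_pow_eq_pow_sum]

lemma mem_terParts {μ : Nat.Partition n} :
    μ ∈ terParts n ↔ ∀ i ∈ μ.parts, ∃ k : ℕ, i = 3 ^ k := by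
  simp [terParts]

lemma parts_decomp (hn : n ≠ 0) {μ : Nat.Partition n} (hμ : μ ∈ terParts n) :
    μ.parts = ∑ k ∈ range (Kk n + 1), Multiset.replicate (mm n μ k) (3 ^ k) := by
  ext i
  rw [Multiset.count_sum']
  by_cases hi : ∃ k, k ≤ Kk n ∧ i = 3 ^ k
  · obtain ⟨k, hk, rfl⟩ := hi
    rw [Finset.sum_eq_single k]
    · rw [Multiset.count_replicate, if_pos rfl]; rfl
    · intro k' _ hk'
      rw [Multiset.count_replicate, if_neg]
      intro h
      exact hk' (Nat.pow_right_injective (by norm_num) h)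
    · intro h; exact absurd (mem_range.mpr (Nat.lt_succ_of_le hk)) h
  · have h0 : i ∉ μ.parts := by
      intro hmem
      obtain ⟨k, rfl⟩ := mem_terParts.mp hμ i hmem
      have hle : 3 ^ k ≤ n := by
        have := Multiset.single_le_sum (fun x _ => Nat.zero_le x) _ hmem
        rwa [μ.parts_sum] at this
      exact hi ⟨k, (pow_le_iff hn).mp hle, rfl⟩
    rw [Multiset.count_eq_zero_of_notMem h0]
    symm
    refine Finset.sum_eq_zero fun k hk => ?_
    rw [Multiset.count_replicate, if_neg]
    intro h
    exact hi ⟨k, Nat.lt_succ_iff.mp (mem_range.mp hk), h.symm⟩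

lemma sum_pow_mul (hn : n ≠ 0) {μ : Nat.Partition n} (hμ : μ ∈ terParts n) :
    ∑ k ∈ range (Kk n + 1), 3 ^ k * mm n μ k = n := by
  have h := μ.parts_sum
  rw [parts_decomp hn hμ] at h
  have key : ∀ s : Finset ℕ,
      (∑ k ∈ s, Multiset.replicate (mm n μ k) (3 ^ k)).sum = ∑ k ∈ s, 3 ^ k * mm n μ k := by
    intro s
    induction s using Finset.induction_on with
    | empty => simp
    | insert _ _ hx ih =>
        rw [Finset.sum_insert hx, Finset.sum_insert hx, Multiset.sum_add, ih,
          Multiset.sum_replicate, smul_eq_mul, mul_comm]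
  rw [key] at h
  exact h

lemma mm_le_aa (hn : n ≠ 0) {μ : Nat.Partition n} (hμ : μ ∈ terParts n) {k : ℕ}
    (hk : k ∈ range (Kk n + 1)) : mm n μ k ≤ aa n k := by
  have h1 : 3 ^ k * mm n μ k ≤ n :=
    le_trans (Finset.single_le_sum (f := fun k => 3 ^ k * mm n μ k)
      (fun i _ => Nat.zero_le _) hk) (le_of_eq (sum_pow_mul hn hμ))
  rw [aa, Nat.le_div_iff_mul_le (pow_pos (by norm_num : (0:ℕ) < 3) k)]
  have hc : mm n μ k * 3 ^ k = 3 ^ k * mm n μ k := mul_comm _ _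
  omega

lemma sum_mm_le (hn : n ≠ 0) {μ : Nat.Partition n} (hμ : μ ∈ terParts n) (j : ℕ) :
    ∑ k ∈ Ico j (Kk n + 1), mm n μ k ≤ aa n j := by
  have h1 : 3 ^ j * ∑ k ∈ Ico j (Kk n + 1), mm n μ k
      ≤ ∑ k ∈ Ico j (Kk n + 1), 3 ^ k * mm n μ k := by
    rw [Finset.mul_sum]
    refine Finset.sum_le_sum fun k hk => ?_
    exact Nat.mul_le_mul_right _ (Nat.pow_le_pow_right (by norm_num) (mem_Ico.mp hk).1)
  have h2 : ∑ k ∈ Ico j (Kk n + 1), 3 ^ k * mm n μ k ≤ n := by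
    refine le_trans (Finset.sum_le_sum_of_subset ?_) (le_of_eq (sum_pow_mul hn hμ))
    intro k hk
    rw [mem_range]
    exact (mem_Ico.mp hk).2
  rw [aa, Nat.le_div_iff_mul_le (pow_pos (by norm_num : (0:ℕ) < 3) j)]
  have hc : (∑ k ∈ Ico j (Kk n + 1), mm n μ k) * 3 ^ j
      = 3 ^ j * ∑ k ∈ Ico j (Kk n + 1), mm n μ k := mul_comm _ _
  omega

lemma bb_eq (hn : n ≠ 0) {μ : Nat.Partition n} (hμ : μ ∈ terParts n) (j : ℕ) :
    bb n μ j = ∑ k ∈ Ico j (Kk n + 1), aa n k - ∑ k ∈ Ico j (Kk n + 1), mm n μ k := by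
  rw [bb]
  refine Finset.sum_tsub_distrib _ fun k hk => ?_
  refine mm_le_aa hn hμ ?_
  rw [mem_range]
  exact (mem_Ico.mp hk).2

lemma sum_aa_split {j : ℕ} (hj : j ≤ Kk n) :
    ∑ k ∈ Ico j (Kk n + 1), aa n k = aa n j + cc n j := by
  rw [Finset.sum_eq_sum_Ico_succ_bot (Nat.lt_succ_of_le hj), cc]

lemma cc_le_bb (hn : n ≠ 0) {μ : Nat.Partition n} (hμ : μ ∈ terParts n) {j : ℕ}
    (hj : j ≤ Kk n) : cc n j ≤ bb n μ j := by
  have h1 := bb_eq hn hμ j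
  have h2 := sum_aa_split (n := n) hj
  have h3 := sum_mm_le hn hμ j
  omega

/-- The special partition with `n/3^j` parts `3^j` and the remainder in parts `1`. -/
noncomputable def sp (n j : ℕ) : Nat.Partition n where
  parts := Multiset.replicate (aa n j) (3 ^ j) + Multiset.replicate (n - 3 ^ j * aa n j) 1
  parts_pos := by
    intro i hi
    rcases Multiset.mem_add.mp hi with h | h <;> rw [Multiset.eq_of_mem_replicate h] <;> positivity
  parts_sum := by
    rw [Multiset.sum_add, Multiset.sum_replicate, Multiset.sum_replicate, smul_eq_mul,
      smul_eq_mul, mul_one]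
    simp only [aa]
    have h1 : n / 3 ^ j * 3 ^ j ≤ n := Nat.div_mul_le_self n (3 ^ j)
    have h2 : n / 3 ^ j * 3 ^ j = 3 ^ j * (n / 3 ^ j) := mul_comm _ _
    omega

lemma sp_mem (n j : ℕ) : sp n j ∈ terParts n := by
  rw [mem_terParts]
  intro i hi
  rcases Multiset.mem_add.mp hi with h | h
  · exact ⟨j, Multiset.eq_of_mem_replicate h⟩
  · exact ⟨0, by rw [Multiset.eq_of_mem_replicate h, pow_zero]⟩

lemma mm_sp (j k : ℕ) : mm n (sp n j) k =
    (if k = j then aa n j else 0) + (if k = 0 then n - 3 ^ j * aa n j else 0) := by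
  rw [mm]
  show Multiset.count (3 ^ k) (Multiset.replicate (aa n j) (3 ^ j)
    + Multiset.replicate (n - 3 ^ j * aa n j) 1) = _
  rw [Multiset.count_add, Multiset.count_replicate, Multiset.count_replicate]
  congr 1
  · refine if_congr ⟨fun h => (Nat.pow_right_injective (by norm_num) h).symm,
      fun h => by rw [h]⟩ rfl rfl
  · refine if_congr ⟨fun h => ?_, fun h => by rw [h, pow_zero]⟩ rfl rfl
    rcases Nat.eq_zero_or_pos k with h0 | h0
    · exact h0
    · exfalso
      have : 3 ≤ 3 ^ k := by
        calc 3 = 3 ^ 1 := (pow_one 3).symm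
        _ ≤ 3 ^ k := Nat.pow_le_pow_right (by norm_num) h0
      omega

lemma aa_zero : aa n 0 = n := by rw [aa, pow_zero, Nat.div_one]

lemma amk_sp {j k : ℕ} (hk : k ∈ Ico j (Kk n + 1)) :
    aa n k - mm n (sp n j) k = if k = j then 0 else aa n k := by
  have hjk := (mem_Ico.mp hk).1
  rw [mm_sp]
  have haz := aa_zero (n := n)
  by_cases h : k = j
  · subst h
    rw [if_pos rfl, if_pos rfl]
    by_cases h0 : k = 0
    · subst h0
      rw [if_pos rfl, pow_zero, one_mul]
      omega
    · rw [if_neg h0]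
      omega
  · have h0 : k ≠ 0 := fun hk0 => h (by omega)
    rw [if_neg h, if_neg h, if_neg h0]
    omega

lemma bb_sp {j : ℕ} (hj : j ≤ Kk n) : bb n (sp n j) j = cc n j := by
  rw [bb]
  have h1 : ∀ k ∈ Ico j (Kk n + 1), aa n k - mm n (sp n j) k
      = if k = j then 0 else aa n k := fun k hk => amk_sp hk
  rw [Finset.sum_congr rfl h1, Finset.sum_eq_sum_Ico_succ_bot (Nat.lt_succ_of_le hj),
    if_pos rfl, zero_add, cc]
  refine Finset.sum_congr rfl fun k hk => ?_
  rw [if_neg]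
  have := (mem_Ico.mp hk).1
  omega

lemma bb_sp0 {j : ℕ} (hj1 : 1 ≤ j) (hj : j ≤ Kk n) :
    bb n (sp n 0) j = aa n j + cc n j := by
  rw [bb, ← sum_aa_split hj]
  refine Finset.sum_congr rfl fun k hk => ?_
  have hk1 := (mem_Ico.mp hk).1
  rw [mm_sp, if_neg (by omega), if_neg (by omega)]
  omega

lemma hT_ne_zero (μ : Nat.Partition n) : hT n μ ≠ 0 := by
  rw [hT]
  refine Finset.prod_ne_zero_iff.mpr fun k _ => pow_ne_zero _ fun h => ?_
  have := congrArg (eval (0 : ℤ)) h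
  simp at this

lemma PP_ne_zero : PP n ≠ 0 :=
  Finset.prod_ne_zero_iff.mpr fun j _ => pow_ne_zero _ (Q_ne_zero j)

lemma PP_monic : (PP n).Monic :=
  monic_prod_of_monic _ _ fun j _ => (Q_monic j).pow _

lemma GT_ne_zero : Finset.gcd (terParts n) (hT n) ≠ 0 := by
  rw [Ne, Finset.gcd_eq_zero_iff]
  push_neg
  exact ⟨sp n 0, sp_mem n 0, hT_ne_zero _⟩

open UniqueFactorizationMonoid in
lemma nf_prod (s : Finset ℕ) (β : ℕ → ℕ) :
    normalizedFactors (∏ j ∈ s, Q j ^ β j) = ∑ j ∈ s, Multiset.replicate (β j) (Q j) := by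
  induction s using Finset.induction_on with
  | empty => simp [normalizedFactors_one]
  | @insert i s hi ih =>
      rw [Finset.prod_insert hi, Finset.sum_insert hi,
        normalizedFactors_mul (pow_ne_zero _ (Q_ne_zero i))
          (Finset.prod_ne_zero_iff.mpr fun j _ => pow_ne_zero _ (Q_ne_zero j)),
        ih, normalizedFactors_pow, normalizedFactors_irreducible (Q_irred i),
        (Q_monic i).normalize_eq_self, Multiset.nsmul_singleton]

lemma count_nf (s : Finset ℕ) (β : ℕ → ℕ) {j : ℕ} (hj : j ∈ s) :
    Multiset.count (Q j) (∑ i ∈ s, Multiset.replicate (β i) (Q i)) = β j := by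
  rw [Multiset.count_sum']
  rw [Finset.sum_eq_single j]
  · rw [Multiset.count_replicate, if_pos rfl]
  · intro i _ hij
    rw [Multiset.count_replicate, if_neg fun h => hij (Q_inj h)]
  · intro h; exact absurd hj h

lemma count_nf_zero (s : Finset ℕ) (β : ℕ → ℕ) {x : Polynomial ℤ}
    (hx : ∀ i ∈ s, Q i ≠ x) :
    Multiset.count x (∑ i ∈ s, Multiset.replicate (β i) (Q i)) = 0 := by
  rw [Multiset.count_sum']
  refine Finset.sum_eq_zero fun i hi => ?_
  rw [Multiset.count_replicate, if_neg (hx i hi)]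

open UniqueFactorizationMonoid in
lemma GT_dvd_PP (hn : n ≠ 0) : Finset.gcd (terParts n) (hT n) ∣ PP n := by
  rw [dvd_iff_normalizedFactors_le_normalizedFactors GT_ne_zero PP_ne_zero,
    Multiset.le_iff_count]
  intro x
  have key : ∀ j, j ≤ Kk n →
      Multiset.count x (normalizedFactors (Finset.gcd (terParts n) (hT n)))
        ≤ Multiset.count x (∑ i ∈ range (Kk n + 1),
            Multiset.replicate (bb n (sp n j) i) (Q i)) := by
    intro j hj
    have hdvd : Finset.gcd (terParts n) (hT n) ∣ hT n (sp n j) :=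
      Finset.gcd_dvd (sp_mem n j)
    have := (dvd_iff_normalizedFactors_le_normalizedFactors GT_ne_zero
      (hT_ne_zero (sp n j))).mp hdvd
    have hle := Multiset.le_iff_count.mp this x
    rwa [hT_eq hn (sp n j), nf_prod] at hle
  rw [PP, nf_prod]
  by_cases hx : ∃ j, j ∈ range (Kk n + 1) ∧ x = Q j
  · obtain ⟨j, hj, rfl⟩ := hx
    rw [count_nf _ _ hj]
    have hjK : j ≤ Kk n := Nat.lt_succ_iff.mp (mem_range.mp hj)
    refine le_trans (key j hjK) ?_
    rw [count_nf _ _ hj, bb_sp hjK]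
  · push_neg at hx
    rw [count_nf_zero _ _ (fun i hi h => hx i hi h.symm)]
    refine Nat.le_zero.mpr (Nat.le_zero.mp ?_)
    refine le_trans (key 0 (Nat.zero_le _)) ?_
    rw [count_nf_zero _ _ (fun i hi h => hx i hi h.symm)]

lemma PP_dvd_GT (hn : n ≠ 0) : PP n ∣ Finset.gcd (terParts n) (hT n) := by
  refine Finset.dvd_gcd fun μ hμ => ?_
  rw [hT_eq hn μ, PP]
  refine Finset.prod_dvd_prod_of_dvd _ _ fun j hj => ?_
  exact pow_dvd_pow _ (cc_le_bb hn hμ (Nat.lt_succ_iff.mp (mem_range.mp hj)))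

lemma GT_eq_PP (hn : n ≠ 0) : Finset.gcd (terParts n) (hT n) = PP n := by
  have h := normalize_eq_normalize (GT_dvd_PP hn) (PP_dvd_GT hn)
  rwa [Finset.normalize_gcd, PP_monic.normalize_eq_self] at h

lemma sp0_parts : (sp n 0).parts = Multiset.replicate n 1 := by
  show Multiset.replicate (aa n 0) (3 ^ 0) + Multiset.replicate (n - 3 ^ 0 * aa n 0) 1 = _
  rw [aa_zero, pow_zero, one_mul, Nat.sub_self, Multiset.replicate_zero, add_zero]

lemma eq_sp0 (hn : n ≠ 0) {μ : Nat.Partition n} (hμ : μ ∈ terParts n)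
    (h : ∑ k ∈ range (Kk n + 1), mm n μ k = n) : μ = sp n 0 := by
  have hsum := sum_pow_mul hn hμ
  have hterm : ∀ k ∈ range (Kk n + 1), mm n μ k ≤ 3 ^ k * mm n μ k := by
    intro k _
    exact Nat.le_mul_of_pos_left _ (pow_pos (by norm_num : (0:ℕ) < 3) k)
  have heq : ∀ k ∈ range (Kk n + 1), mm n μ k = 3 ^ k * mm n μ k :=
    (Finset.sum_eq_sum_iff_of_le hterm).mp (by rw [h, hsum])
  have hzero : ∀ k, 1 ≤ k → k ≤ Kk n → mm n μ k = 0 := by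
    intro k hk1 hkK
    have h3 : 3 ≤ 3 ^ k := by
      calc (3:ℕ) = 3 ^ 1 := (pow_one 3).symm
      _ ≤ 3 ^ k := Nat.pow_le_pow_right (by norm_num) hk1
    have := heq k (mem_range.mpr (Nat.lt_succ_of_le hkK))
    nlinarith [Nat.zero_le (mm n μ k)]
  have hall1 : ∀ i ∈ μ.parts, i = 1 := by
    intro i hi
    obtain ⟨k, rfl⟩ := mem_terParts.mp hμ i hi
    have hle : 3 ^ k ≤ n := by
      have := Multiset.single_le_sum (fun x _ => Nat.zero_le x) _ hi
      rwa [μ.parts_sum] at this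
    have hkK : k ≤ Kk n := (pow_le_iff hn).mp hle
    rcases Nat.eq_zero_or_pos k with h0 | h0
    · rw [h0, pow_zero]
    · exfalso
      have hpos : 0 < mm n μ k := Multiset.count_pos.mpr hi
      have := hzero k h0 hkK
      omega
  have hrep := Multiset.eq_replicate_of_mem hall1
  have hcard : Multiset.card μ.parts = n := by
    have := μ.parts_sum
    rw [hrep, Multiset.sum_replicate, smul_eq_mul, mul_one] at this
    rw [hrep, this, Multiset.card_replicate]
  refine Nat.Partition.ext ?_
  rw [sp0_parts, hrep, hcard]

lemma bb_zero_eq (hn : n ≠ 0) {μ : Nat.Partition n} (hμ : μ ∈ terParts n) :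
    bb n μ 0 = (n + cc n 0) - ∑ k ∈ range (Kk n + 1), mm n μ k := by
  have h1 := bb_eq hn hμ 0
  have h2 := sum_aa_split (n := n) (Nat.zero_le _)
  rw [aa_zero] at h2
  rw [h1, h2]
  congr 1
  rw [Finset.range_eq_Ico]

lemma sum_mm_le_n (hn : n ≠ 0) {μ : Nat.Partition n} (hμ : μ ∈ terParts n) :
    ∑ k ∈ range (Kk n + 1), mm n μ k ≤ n := by
  have h := sum_mm_le hn hμ 0
  rw [aa_zero] at h
  refine le_trans (le_of_eq ?_) h
  rw [Finset.range_eq_Ico]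

lemma sum_hT_eq (hn : n ≠ 0) : ∑ μ ∈ terParts n, hT n μ = PP n * TT n := by
  rw [TT, Finset.mul_sum]
  refine Finset.sum_congr rfl fun μ hμ => ?_
  rw [hT_eq hn μ, PP, ← Finset.prod_mul_distrib]
  refine Finset.prod_congr rfl fun j hj => ?_
  rw [← pow_add]
  congr 1
  have := cc_le_bb hn hμ (Nat.lt_succ_iff.mp (mem_range.mp hj))
  omega

lemma eval_TT (hn : n ≠ 0) :
    eval (-1 : ℤ) (TT n) = 3 ^ ∑ j ∈ Ico 1 (Kk n + 1), aa n j := by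
  rw [TT, eval_finset_sum]
  rw [Finset.sum_eq_single_of_mem (sp n 0) (sp_mem n 0)]
  · rw [eval_prod]
    have h0K : 0 < Kk n + 1 := Nat.succ_pos _
    rw [Finset.range_eq_Ico, Finset.prod_eq_prod_Ico_succ_bot h0K]
    have hfirst : eval (-1 : ℤ) (Q 0 ^ (bb n (sp n 0) 0 - cc n 0)) = 1 := by
      rw [bb_sp (Nat.zero_le _), Nat.sub_self, pow_zero, eval_one]
    have hrest : ∀ j ∈ Ico 1 (Kk n + 1),
        eval (-1 : ℤ) (Q j ^ (bb n (sp n 0) j - cc n j)) = 3 ^ aa n j := by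
      intro j hj
      obtain ⟨hj1, hj2⟩ := mem_Ico.mp hj
      obtain ⟨j', rfl⟩ : ∃ j', j = j' + 1 := ⟨j - 1, by omega⟩
      rw [eval_pow, eval_Q_succ, bb_sp0 hj1 (by omega)]
      congr 1
      omega
    rw [hfirst, one_mul, Finset.prod_congr rfl hrest, Finset.prod_pow_eq_pow_sum]
  · intro μ hμ hne
    rw [eval_prod]
    refine Finset.prod_eq_zero (Finset.mem_range.mpr (Nat.succ_pos _)) ?_
    rw [eval_pow, eval_Q_zero]
    refine zero_pow ?_
    have h1 := bb_zero_eq hn hμ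
    have h2 : ∑ k ∈ range (Kk n + 1), mm n μ k < n := by
      rcases lt_or_eq_of_le (sum_mm_le_n hn hμ) with h | h
      · exact h
      · exact absurd (eq_sp0 hn hμ h) hne
    omega

end TernaryAux

/-- For every integer `n ≥ 1`, the evaluation of the ternary-partition numerator at `x = −1`
satisfies `num_T(n,−1) = 3^{v₃(n!)}`, where `v₃(M)` is the exponent of `3` in the prime
factorization of `M`. -/
theorem numT_eval_neg_one (n : ℕ) (hn : 1 ≤ n) :
    Polynomial.eval (-1 : ℤ) (numT n) =
      3 ^ ((Nat.factorial n).factorization 3) := by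
  have hn' : n ≠ 0 := by omega
  have hspec : (∑ μ ∈ terParts n, hT n μ) = GT n * numT n := (GT_dvd_sum n).choose_spec
  have hGT : GT n = TernaryAux.PP n := TernaryAux.GT_eq_PP hn'
  rw [TernaryAux.sum_hT_eq hn', hGT] at hspec
  have hnum := mul_left_cancel₀ (TernaryAux.PP_ne_zero (n := n)) hspec
  rw [← hnum, TernaryAux.eval_TT hn']
  congr 1
  haveI : Fact (Nat.Prime 3) := ⟨by norm_num⟩
  rw [Nat.factorization_def _ (by norm_num), padicValNat_factorial (Nat.lt_succ_self _)]
  rfl
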